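/- For p, q ∈ ℝ³ set p₀ := √(1 + |p|²), q₀ := √(1 + |q|²) and τ(p,q) := p₀ q₀ − p·q. There exists a constant C > 0 such that for all p ≠ q in ℝ³, one has τ(p,q) > 1 and (τ(p,q) − 1)^{−1/2} ≤ C ( q₀/|p − q| + (q₀/p₀)^{1/2} ). -/

import Mathlib

open MeasureTheory

/-- Relativistic energy `p₀ = √(1 + |p|²)`. -/
noncomputable def pZero (p : EuclideanSpace ℝ (Fin 3)) : ℝ := Real.sqrt (1 + ‖p‖ ^ 2)

/-- `τ(p,q) = p₀ q₀ - p·q`, the Lorentz inner product of the energy-momentum 4-vectors. -/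
noncomputable def tauLor (p q : EuclideanSpace ℝ (Fin 3)) : ℝ :=
  pZero p * pZero q - (inner ℝ p q : ℝ)

lemma one_le_pZero (p : EuclideanSpace ℝ (Fin 3)) : 1 ≤ pZero p := by
  have := Real.sqrt_le_sqrt (show (1:ℝ) ≤ 1 + ‖p‖ ^ 2 by nlinarith [sq_nonneg ‖p‖])
  simpa [pZero] using this

lemma sq_pZero (p : EuclideanSpace ℝ (Fin 3)) : pZero p ^ 2 = 1 + ‖p‖ ^ 2 :=
  Real.sq_sqrt (by positivity)

lemma norm_le_pZero (p : EuclideanSpace ℝ (Fin 3)) : ‖p‖ ≤ pZero p :=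
  (Real.le_sqrt (norm_nonneg p) (by positivity)).mpr (by linarith)

set_option maxHeartbeats 1000000 in
/-- There is `C > 0` such that for `p ≠ q` one has `τ(p,q) > 1` and
`(τ(p,q) - 1)^{-1/2} ≤ C (q₀/|p - q| + (q₀/p₀)^{1/2})`. -/
theorem tauLor_inv_sqrt_bound :
    ∃ C : ℝ, 0 < C ∧ ∀ p q : EuclideanSpace ℝ (Fin 3), p ≠ q →
      1 < tauLor p q ∧
      (tauLor p q - 1) ^ (-(1 / 2) : ℝ)
        ≤ C * (pZero q / dist p q + Real.sqrt (pZero q / pZero p)) := by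
  refine ⟨4, by norm_num, fun p q hpq => ?_⟩
  set P := pZero p with hPdef
  set Q := pZero q with hQdef
  set a := (inner ℝ p q : ℝ) with hadef
  set r := dist p q with hrdef
  have hP1 : 1 ≤ P := one_le_pZero p
  have hQ1 : 1 ≤ Q := one_le_pZero q
  have hPsq : P ^ 2 = 1 + ‖p‖ ^ 2 := sq_pZero p
  have hQsq : Q ^ 2 = 1 + ‖q‖ ^ 2 := sq_pZero q
  have hpP : ‖p‖ ≤ P := norm_le_pZero p
  have hqQ : ‖q‖ ≤ Q := norm_le_pZero q
  have ha := abs_real_inner_le_norm p q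
  have ha1 : a ≤ ‖p‖ * ‖q‖ := (abs_le.mp ha).2
  have ha2 : -(‖p‖ * ‖q‖) ≤ a := (abs_le.mp ha).1
  have ha3 : a ^ 2 ≤ ‖p‖ ^ 2 * ‖q‖ ^ 2 := by nlinarith [norm_nonneg p, norm_nonneg q]
  have hr0 : 0 < r := dist_pos.mpr hpq
  have hrsq : r ^ 2 = ‖p‖ ^ 2 - 2 * a + ‖q‖ ^ 2 := by
    rw [hrdef, dist_eq_norm]
    exact norm_sub_sq_real p q
  have hPQpq : ‖p‖ * ‖q‖ ≤ P * Q := by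
    nlinarith [norm_nonneg p, norm_nonneg q, mul_nonneg (norm_nonneg p) (norm_nonneg q)]
  have hPQ1 : 1 ≤ P * Q := one_le_mul_of_one_le_of_one_le hP1 hQ1
  have htau : 1 < P * Q - a := by
    nlinarith [sq_nonneg r, mul_nonneg (norm_nonneg p) (norm_nonneg q)]
  have htau' : tauLor p q = P * Q - a := rfl
  refine ⟨by rw [htau']; exact htau, ?_⟩
  set t := tauLor p q - 1 with htdef
  have ht : 0 < t := by rw [htdef, htau']; linarith
  have hkey : r ^ 2 ≤ t * (3 * (P * Q)) := by
    rw [htdef, htau']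
    nlinarith [mul_nonneg (norm_nonneg p) (norm_nonneg q)]
  have hst : 0 < Real.sqrt t := Real.sqrt_pos.mpr ht
  have hP0 : (0:ℝ) < P := by linarith
  have hQ0 : (0:ℝ) < Q := by linarith
  have hrle : r ≤ Real.sqrt t * Real.sqrt (3 * (P * Q)) := by
    rw [← Real.sqrt_mul ht.le]
    rw [show r = Real.sqrt (r ^ 2) by rw [Real.sqrt_sq hr0.le]]
    exact Real.sqrt_le_sqrt hkey
  have hinv : (Real.sqrt t)⁻¹ ≤ Real.sqrt (3 * (P * Q)) / r := by
    rw [inv_eq_one_div, div_le_div_iff₀ hst hr0]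
    linarith
  have hrpow : t ^ (-(1 / 2) : ℝ) = (Real.sqrt t)⁻¹ := by
    rw [Real.rpow_neg ht.le, Real.sqrt_eq_rpow]
  rw [hrpow]
  have hsqrtQP : (0:ℝ) ≤ Real.sqrt (Q / P) := Real.sqrt_nonneg _
  rcases le_or_gt P (4 * Q) with hcase | hcase
  · -- P ≤ 4Q : use the first term
    have h1 : Real.sqrt (3 * (P * Q)) ≤ 4 * Q := by
      rw [show (4:ℝ) * Q = Real.sqrt ((4 * Q) ^ 2) by rw [Real.sqrt_sq (by linarith)]]
      apply Real.sqrt_le_sqrt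
      nlinarith
    have h2 : Real.sqrt (3 * (P * Q)) / r ≤ 4 * Q / r :=
      div_le_div_of_nonneg_right h1 hr0.le
    calc (Real.sqrt t)⁻¹ ≤ Real.sqrt (3 * (P * Q)) / r := hinv
      _ ≤ 4 * Q / r := h2
      _ ≤ 4 * (Q / r + Real.sqrt (Q / P)) := by
          rw [mul_add, mul_div_assoc]
          linarith [Real.sqrt_nonneg (Q / P)]
  · -- 4Q < P : use the second term
    have hP4 : (4:ℝ) ≤ P := by linarith
    have hp34 : 3 * P / 4 ≤ ‖p‖ := by
      have h1 : (3 * P / 4) ^ 2 ≤ ‖p‖ ^ 2 := by nlinarith [hPsq, hP4]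
      calc 3 * P / 4 = Real.sqrt ((3 * P / 4) ^ 2) := (Real.sqrt_sq (by linarith)).symm
        _ ≤ Real.sqrt (‖p‖ ^ 2) := Real.sqrt_le_sqrt h1
        _ = ‖p‖ := Real.sqrt_sq (norm_nonneg p)
    have hrP : P / 2 ≤ r := by
      have h := norm_sub_norm_le p q
      rw [hrdef, dist_eq_norm]
      linarith
    have hQP : Real.sqrt (Q / P) = Real.sqrt (P * Q) / P := by
      rw [show Q / P = P * Q / P ^ 2 by field_simp,
        Real.sqrt_div (by positivity) (P ^ 2), Real.sqrt_sq hP0.le]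
    have h3 : Real.sqrt (3 * (P * Q)) ≤ 2 * Real.sqrt (P * Q) := by
      rw [show (2:ℝ) * Real.sqrt (P * Q) = Real.sqrt ((2 * Real.sqrt (P * Q)) ^ 2) by
        rw [Real.sqrt_sq (by positivity)]]
      apply Real.sqrt_le_sqrt
      nlinarith [Real.sq_sqrt (show (0:ℝ) ≤ P * Q by positivity)]
    have h4 : Real.sqrt (3 * (P * Q)) / r ≤ 2 * Real.sqrt (P * Q) / (P / 2) := by
      apply div_le_div₀ (by positivity) h3 (by linarith) hrP
    have h5 : 2 * Real.sqrt (P * Q) / (P / 2) = 4 * Real.sqrt (Q / P) := by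
      rw [hQP]; field_simp; ring
    have hQr : 0 ≤ Q / r := by positivity
    calc (Real.sqrt t)⁻¹ ≤ Real.sqrt (3 * (P * Q)) / r := hinv
      _ ≤ 4 * Real.sqrt (Q / P) := by rw [← h5]; exact h4
      _ ≤ 4 * (Q / r + Real.sqrt (Q / P)) := by
          rw [mul_add]
          linarith [div_nonneg hQ0.le hr0.le]
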